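/- If Z ~ N(g, 1) and q ≥ 1, then E[|Z|^{2/q}] = (1/√π) · 2^{1/q} · Γ(1/q + 1/2) · M(−1/q, 1/2, −g²/2), where M(c, d, x) = Σ_{n≥0} (c)_n x^n / ((d)_n n!) is the confluent hypergeometric function. -/

import Mathlib

open MeasureTheory ProbabilityTheory Real Finset
open scoped NNReal ENNReal

noncomputable def pochEval (a : ℝ) (n : ℕ) : ℝ := (ascPochhammer ℝ n).eval a

local notation "P" => pochEval

lemma poch_zero (a : ℝ) : P a 0 = 1 := by simp [pochEval]

lemma poch_succ (a : ℝ) (n : ℕ) : P a (n + 1) = P a n * (a + n) :=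
  ascPochhammer_succ_eval n a

lemma poch_succ_left (a : ℝ) (n : ℕ) : P a (n + 1) = a * P (a + 1) n := by
  unfold pochEval
  rw [ascPochhammer_succ_left]
  simp [Polynomial.eval_comp]

lemma poch_pos {a : ℝ} (ha : 0 < a) (n : ℕ) : 0 < P a n := by
  induction n with
  | zero => simp [poch_zero]
  | succ n ih => rw [poch_succ]; positivity

lemma gamma_poch {a : ℝ} (ha : 0 < a) (n : ℕ) :
    Real.Gamma (a + n) = Real.Gamma a * P a n := by
  induction n with
  | zero => simp [poch_zero]
  | succ n ih =>
    have h : a + (n + 1 : ℕ) = (a + n) + 1 := by push_cast; ring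
    rw [h, Real.Gamma_add_one (by positivity), ih, poch_succ]; ring

lemma factorial_two_mul (m : ℕ) :
    ((2 * m).factorial : ℝ) = 4 ^ m * (m.factorial : ℝ) * P (1/2) m := by
  induction m with
  | zero => simp [poch_zero]
  | succ m ih =>
    have h : 2 * (m + 1) = (2 * m + 1) + 1 := by ring
    rw [h, Nat.factorial_succ, Nat.factorial_succ, Nat.factorial_succ, poch_succ]
    push_cast
    rw [ih]
    push_cast
    ring

lemma chu_vandermonde : ∀ (n : ℕ) (a b : ℝ), 0 < b →
    ∑ k ∈ Finset.range (n + 1), (-1 : ℝ) ^ k * (n.choose k : ℝ) * P a k / P b k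
      = P (b - a) n / P b n := by
  intro n
  induction n with
  | zero => intro a b hb; simp [poch_zero]
  | succ n ih =>
    intro a b hb
    have hbn : ∀ m : ℕ, (0:ℝ) < P b m := poch_pos hb
    have hbn1 : ∀ m : ℕ, (0:ℝ) < P (b+1) m := poch_pos (by linarith)
    -- split the sum
    have key : ∑ k ∈ Finset.range (n + 2), (-1 : ℝ) ^ k * ((n+1).choose k : ℝ) * P a k / P b k
        = (∑ k ∈ Finset.range (n + 1), (-1 : ℝ) ^ k * (n.choose k : ℝ) * P a k / P b k)
          - (a / b) * ∑ k ∈ Finset.range (n + 1),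
              (-1 : ℝ) ^ k * (n.choose k : ℝ) * P (a+1) k / P (b+1) k := by
      rw [Finset.sum_range_succ' (fun k => (-1 : ℝ) ^ k * ((n+1).choose k : ℝ) * P a k / P b k)]
      have e1 : ∀ k ∈ Finset.range (n+1),
          (-1 : ℝ) ^ (k+1) * ((n+1).choose (k+1) : ℝ) * P a (k+1) / P b (k+1)
          = ((-1 : ℝ) ^ (k+1) * (n.choose (k+1) : ℝ) * P a (k+1) / P b (k+1))
            + (-(1:ℝ)) * ((-1 : ℝ) ^ k * (n.choose k : ℝ) * ((a / b) * (P (a+1) k / P (b+1) k))) := by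
        intro k _
        rw [Nat.choose_succ_succ, poch_succ_left a, poch_succ_left b]
        push_cast
        have hb' : b ≠ 0 := ne_of_gt hb
        have h1 : P (b+1) k ≠ 0 := ne_of_gt (hbn1 k)
        field_simp
        ring
      rw [Finset.sum_congr rfl e1, Finset.sum_add_distrib, ← Finset.mul_sum]
      have e2 : (-1 : ℝ) ^ 0 * ((n+1).choose 0 : ℝ) * P a 0 / P b 0
          + (∑ k ∈ Finset.range (n+1),
          (-1 : ℝ) ^ (k+1) * (n.choose (k+1) : ℝ) * P a (k+1) / P b (k+1))
          = ∑ k ∈ Finset.range (n + 1), (-1 : ℝ) ^ k * (n.choose k : ℝ) * P a k / P b k := by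
        have hc : (((n+1).choose 0 : ℕ) : ℝ) = ((n.choose 0 : ℕ) : ℝ) := by simp
        rw [hc, add_comm,
          ← Finset.sum_range_succ' (fun k => (-1 : ℝ) ^ k * (n.choose k : ℝ) * P a k / P b k),
          Finset.sum_range_succ]
        simp [Nat.choose_succ_self]
      have e3 : ∑ k ∈ Finset.range (n+1),
          (-1 : ℝ) ^ k * (n.choose k : ℝ) * (a / b * (P (a+1) k / P (b+1) k))
          = (a / b) * ∑ k ∈ Finset.range (n+1),
              (-1 : ℝ) ^ k * (n.choose k : ℝ) * P (a+1) k / P (b+1) k := by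
        rw [Finset.mul_sum]
        apply Finset.sum_congr rfl
        intro k _
        ring
      rw [e3]
      linarith [e2]
    rw [key, ih a b hb, ih (a+1) (b+1) (by linarith)]
    have h1 : b + 1 - (a + 1) = b - a := by ring
    rw [h1]
    have h2 : P b (n+1) = b * P (b+1) n := poch_succ_left b n
    have h3 : P b (n+1) = P b n * (b + n) := poch_succ b n
    have h4 : P (b-a) (n+1) = P (b-a) n * ((b - a) + n) := poch_succ _ n
    have hb' : b ≠ 0 := ne_of_gt hb
    have h5 : P b n ≠ 0 := ne_of_gt (hbn n)
    have h6 : P (b+1) n ≠ 0 := ne_of_gt (hbn1 n)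
    have h7 : P b (n+1) ≠ 0 := ne_of_gt (hbn (n+1))
    have h8 : b + n ≠ 0 := by positivity
    rw [h4]
    have h9 : P (b+1) n = P b n * (b + n) / b := by
      rw [← h3, h2]; field_simp
    rw [h2, h9]
    field_simp
    ring

lemma summable_norm_M (a t : ℝ) :
    Summable (fun n : ℕ => ‖P a n * t ^ n / (P (1/2) n * (n.factorial : ℝ))‖) := by
  apply summable_of_ratio_norm_eventually_le (r := 1/2) (by norm_num)
  rw [Filter.eventually_atTop]
  refine ⟨⌈|a| + 4 * |t|⌉₊ + 1, fun n hn => ?_⟩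
  have hna : |a| + 4 * |t| ≤ (n : ℝ) := by
    calc |a| + 4 * |t| ≤ (⌈|a| + 4 * |t|⌉₊ : ℝ) := Nat.le_ceil _
    _ ≤ (n : ℝ) := by exact_mod_cast Nat.le_of_succ_le hn
  have ha' : |a| ≤ (n : ℝ) := by have := abs_nonneg t; linarith
  have ht' : 4 * |t| ≤ (n : ℝ) := by have := abs_nonneg a; linarith
  have hp2 : (0:ℝ) < P (1/2) n := poch_pos (by norm_num) n
  have hfac : (0:ℝ) < (n.factorial : ℝ) := by exact_mod_cast n.factorial_pos
  simp only [norm_norm]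
  have hrec : P a (n + 1) * t ^ (n + 1) / (P (1/2) (n + 1) * ((n+1).factorial : ℝ))
      = (P a n * t ^ n / (P (1/2) n * (n.factorial : ℝ)))
        * ((a + n) * t / ((1/2 + n) * (n + 1))) := by
    rw [poch_succ, poch_succ, Nat.factorial_succ, pow_succ]
    push_cast
    have h1 : (1/2 : ℝ) + n ≠ 0 := by positivity
    have h2 : (n : ℝ) + 1 ≠ 0 := by positivity
    field_simp
  rw [hrec, norm_mul]
  rw [mul_comm (1/2 : ℝ) _]
  apply mul_le_mul_of_nonneg_left _ (norm_nonneg _)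
  rw [norm_div, norm_mul, norm_mul]
  have hd : ‖(1/2 + (n:ℝ))‖ * ‖((n:ℝ) + 1)‖ = (1/2 + (n:ℝ)) * ((n:ℝ) + 1) := by
    rw [Real.norm_eq_abs, Real.norm_eq_abs, abs_of_pos (by positivity), abs_of_pos (by positivity)]
  rw [hd, div_le_iff₀ (by positivity)]
  have h1 : ‖a + (n:ℝ)‖ ≤ |a| + n := by
    rw [Real.norm_eq_abs]
    calc |a + (n:ℝ)| ≤ |a| + |(n:ℝ)| := abs_add_le _ _
    _ = |a| + n := by rw [Nat.abs_cast]
  have h2 : ‖t‖ = |t| := rfl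
  rw [h2]
  have hA := abs_nonneg a
  have hT := abs_nonneg t
  nlinarith [mul_le_mul_of_nonneg_right h1 hT, sq_nonneg ((n:ℝ) - 4 * |t|)]

lemma summable_M (a t : ℝ) :
    Summable (fun n : ℕ => P a n * t ^ n / (P (1/2) n * (n.factorial : ℝ))) :=
  (summable_norm_M a t).of_norm

lemma kummer (a t : ℝ) :
    Real.exp (-t) * ∑' n : ℕ, P a n * t ^ n / (P (1/2) n * (n.factorial : ℝ))
      = ∑' n : ℕ, P (1/2 - a) n * (-t) ^ n / (P (1/2) n * (n.factorial : ℝ)) := by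
  have hexp : Real.exp (-t) = ∑' n : ℕ, (-t) ^ n / (n.factorial : ℝ) := by
    rw [Real.exp_eq_exp_ℝ, NormedSpace.exp_eq_tsum_div]
  have hf : Summable (fun n : ℕ => ‖(-t) ^ n / (n.factorial : ℝ)‖) := by
    apply (Real.summable_pow_div_factorial |t|).congr
    intro n
    simp [Real.norm_eq_abs, abs_div, abs_pow, Nat.abs_cast]
  have hg := summable_norm_M a t
  rw [hexp, tsum_mul_tsum_eq_tsum_sum_antidiagonal_of_summable_norm hf hg]
  apply tsum_congr
  intro n
  rw [Finset.Nat.sum_antidiagonal_eq_sum_range_succ_mk]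
  rw [← Finset.sum_range_reflect]
  have step : ∀ k ∈ Finset.range (n + 1),
      (-t) ^ (n + 1 - 1 - k) / ((n + 1 - 1 - k).factorial : ℝ)
        * (P a (n - (n + 1 - 1 - k)) * t ^ (n - (n + 1 - 1 - k))
            / (P (1/2) (n - (n + 1 - 1 - k)) * ((n - (n + 1 - 1 - k)).factorial : ℝ)))
      = (-1:ℝ)^n * t ^ n / (n.factorial : ℝ)
          * ((-1:ℝ)^k * ((n.choose k) : ℝ) * P a k / P (1/2) k) := by
    intro k hk
    have hk' : k ≤ n := Nat.lt_succ_iff.mp (Finset.mem_range.mp hk)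
    have e0 : n + 1 - 1 - k = n - k := by omega
    have e1 : n - (n - k) = k := by omega
    rw [e0, e1]
    have hkn : n - k ≤ n := Nat.sub_le n k
    have hfact : ((n.choose k) : ℝ) * ((k.factorial : ℝ)) * (((n-k).factorial : ℝ))
        = (n.factorial : ℝ) := by
      exact_mod_cast Nat.choose_mul_factorial_mul_factorial hk'
    have hn' : (n.factorial : ℝ)
        = ((n.choose k) : ℝ) * ((k.factorial : ℝ)) * (((n-k).factorial : ℝ)) := hfact.symm
    have hsgn : (-t) ^ (n - k) = (-1:ℝ)^(n-k) * t ^ (n - k) := by rw [neg_pow]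
    have hpow : t ^ (n - k) * t ^ k = t ^ n := pow_sub_mul_pow t hk'
    have hsgn2 : (-1:ℝ)^n = (-1:ℝ)^(n-k) * (-1:ℝ)^k := by
      rw [← pow_add, Nat.sub_add_cancel hk']
    have hkf : ((k.factorial : ℝ)) ≠ 0 := by positivity
    have hnkf : (((n-k).factorial : ℝ)) ≠ 0 := by positivity
    have hp2 : P (1/2) k ≠ 0 := ne_of_gt (poch_pos (by norm_num) _)
    have hch : ((n.choose k : ℕ) : ℝ) ≠ 0 := by
      exact_mod_cast (Nat.choose_pos hk').ne'
    rw [hsgn, hsgn2, hn', ← hpow]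
    have hone : ((-1:ℝ)) ^ k * ((-1:ℝ)) ^ k = 1 := by
      rw [← pow_add]
      exact Even.neg_one_pow ⟨k, rfl⟩
    rcases Nat.even_or_odd (n - k) with h | h
    · rw [h.neg_one_pow]
      field_simp
      linear_combination (-(t^(n-k) * t^k * P a k)) * hone
    · rw [h.neg_one_pow]
      field_simp
      linear_combination (t^(n-k) * t^k * P a k) * hone
  rw [Finset.sum_congr rfl step, ← Finset.mul_sum,
    chu_vandermonde n a (1/2) (by norm_num)]
  have hp2 : P (1/2) n ≠ 0 := ne_of_gt (poch_pos (by norm_num) _)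
  have hnf : ((n.factorial : ℝ)) ≠ 0 := by positivity
  rw [neg_pow]
  field_simp
  ring

lemma integrable_abs_rpow_gauss {b s : ℝ} (hb : 0 < b) (hs : 0 < s) :
    Integrable (fun x : ℝ => |x| ^ s * Real.exp (-b * x ^ 2)) := by
  have hs' : (-1:ℝ) < s := by linarith
  have h1 : Integrable (fun x : ℝ => x ^ s * Real.exp (-b * x ^ 2)) :=
    integrable_rpow_mul_exp_neg_mul_sq hb hs'
  have h2 : Integrable (fun x : ℝ => (-x) ^ s * Real.exp (-b * x ^ 2)) := by
    have h3 := ((Measure.measurePreserving_neg (volume : Measure ℝ)).integrable_comp_emb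
      (Homeomorph.neg ℝ).measurableEmbedding
      (g := fun x : ℝ => x ^ s * Real.exp (-b * x ^ 2))).mpr h1
    apply h3.congr
    filter_upwards with x
    show (-x) ^ s * Real.exp (-b * (-x) ^ 2) = (-x) ^ s * Real.exp (-b * x ^ 2)
    rw [neg_sq]
  apply Integrable.mono' (h1.norm.add h2.norm)
  · apply Continuous.aestronglyMeasurable
    exact (continuous_abs.rpow_const (fun x => Or.inr hs.le)).mul
      (Real.continuous_exp.comp (continuous_const.mul (continuous_pow 2)))
  · filter_upwards with x
    rcases le_total 0 x with hx | hx
    · rw [Real.norm_eq_abs, abs_of_nonneg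
        (mul_nonneg (Real.rpow_nonneg (abs_nonneg x) s) (Real.exp_pos _).le),
        abs_of_nonneg hx]
      have : x ^ s * Real.exp (-b * x ^ 2) = ‖x ^ s * Real.exp (-b * x ^ 2)‖ := by
        rw [Real.norm_eq_abs, abs_of_nonneg
          (mul_nonneg (Real.rpow_nonneg hx s) (Real.exp_pos _).le)]
      rw [this]
      exact le_add_of_nonneg_right (norm_nonneg _)
    · rw [Real.norm_eq_abs, abs_of_nonneg
        (mul_nonneg (Real.rpow_nonneg (abs_nonneg x) s) (Real.exp_pos _).le),
        abs_of_nonpos hx]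
      have : (-x) ^ s * Real.exp (-b * x ^ 2) = ‖(-x) ^ s * Real.exp (-b * x ^ 2)‖ := by
        rw [Real.norm_eq_abs, abs_of_nonneg
          (mul_nonneg (Real.rpow_nonneg (by linarith) s) (Real.exp_pos _).le)]
      rw [this]
      exact le_add_of_nonneg_left (norm_nonneg _)

lemma integral_abs_rpow_gauss {s : ℝ} (hs : 0 < s) :
    ∫ x : ℝ, |x| ^ s * Real.exp (-(1/2) * x ^ 2)
      = 2 ^ ((s+1)/2) * Real.Gamma ((s+1)/2) := by
  have h0 : (fun x : ℝ => |x| ^ s * Real.exp (-(1/2) * x ^ 2))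
      = fun x : ℝ => (fun y : ℝ => y ^ s * Real.exp (-(1/2) * y ^ 2)) |x| := by
    funext x
    simp only
    rw [sq_abs]
  rw [h0, integral_comp_abs (f := fun y : ℝ => y ^ s * Real.exp (-(1/2) * y ^ 2))]
  have hIoi : ∫ x in Set.Ioi (0:ℝ), x ^ s * Real.exp (-(1/2) * x ^ 2)
      = (1/2:ℝ) ^ (-(s+1)/2) * (1/2) * Real.Gamma ((s+1)/2) := by
    have h := integral_rpow_mul_exp_neg_mul_rpow (p := 2) (q := s) (b := 1/2)
      two_pos (by linarith) (by norm_num)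
    rw [← h]
    apply setIntegral_congr_fun measurableSet_Ioi
    intro x _
    have h2 : x ^ (2:ℝ) = x ^ (2:ℕ) := by
      rw [← Real.rpow_natCast x 2]
      norm_num
    simp only [h2]
  rw [hIoi]
  have h2 : (1/2:ℝ) ^ (-(s+1)/2) = 2 ^ ((s+1)/2) := by
    rw [one_div, ← Real.rpow_neg_one (2:ℝ), ← Real.rpow_mul (by norm_num : (0:ℝ) ≤ 2)]
    congr 1
    ring
  rw [h2]
  ring

lemma summable_even_exp (y : ℝ) :
    Summable (fun m : ℕ => y ^ (2*m) / ((2*m).factorial : ℝ)) := by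
  have h := (Real.summable_pow_div_factorial y).add (Real.summable_pow_div_factorial (-y))
  have hinj : Function.Injective (fun m : ℕ => 2*m) := fun a b hab => by
    have h' : 2*a = 2*b := hab
    omega
  have h2 : Summable (fun m : ℕ => y ^ (2*m) / ((2*m).factorial : ℝ)
      + (-y) ^ (2*m) / ((2*m).factorial : ℝ)) := h.comp_injective hinj
  apply (h2.mul_left (1/2)).congr
  intro m
  rw [Even.neg_pow (even_two_mul m)]
  ring

lemma exp_add_exp_neg (y : ℝ) :
    Real.exp y + Real.exp (-y) = 2 * ∑' m : ℕ, y ^ (2*m) / ((2*m).factorial : ℝ) := by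
  have hu := Real.summable_pow_div_factorial y
  have hv := Real.summable_pow_div_factorial (-y)
  have hinj : Function.Injective (fun m : ℕ => 2*m) := fun a b hab => by
    have h' : 2*a = 2*b := hab
    omega
  have hexp : Real.exp y + Real.exp (-y)
      = ∑' n : ℕ, (y ^ n / (n.factorial : ℝ) + (-y) ^ n / (n.factorial : ℝ)) := by
    rw [Summable.tsum_add hu hv, Real.exp_eq_exp_ℝ, NormedSpace.exp_eq_tsum_div]
  rw [hexp]
  have hsupp : Function.support
      (fun n : ℕ => y ^ n / (n.factorial : ℝ) + (-y) ^ n / (n.factorial : ℝ))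
      ⊆ Set.range (fun m : ℕ => 2*m) := by
    intro n hn
    rcases Nat.even_or_odd n with he | ho
    · obtain ⟨r, hr⟩ := he
      exact ⟨r, by show 2*r = n; omega⟩
    · exfalso
      apply hn
      show y ^ n / (n.factorial : ℝ) + (-y) ^ n / (n.factorial : ℝ) = 0
      rw [ho.neg_pow]
      ring
  rw [← Function.Injective.tsum_eq hinj hsupp]
  rw [← tsum_mul_left]
  apply tsum_congr
  intro m
  show y ^ (2*m) / ((2*m).factorial : ℝ) + (-y) ^ (2*m) / ((2*m).factorial : ℝ)
      = 2 * (y ^ (2*m) / ((2*m).factorial : ℝ))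
  rw [Even.neg_pow (even_two_mul m)]
  ring

lemma abs_pow_eq {p : ℝ} (hp : 0 < p) (m : ℕ) (x : ℝ) :
    |x| ^ p * x ^ (2*m) = |x| ^ (p + 2*(m:ℝ)) := by
  rcases eq_or_ne x 0 with rfl | hx
  · have hpm : (0:ℝ) < p + 2*(m:ℝ) := by
      have : (0:ℝ) ≤ (m:ℝ) := Nat.cast_nonneg m
      linarith
    rcases Nat.eq_zero_or_pos m with rfl | hm
    · simp [Real.zero_rpow hp.ne', Real.zero_rpow hpm.ne']
    · rw [abs_zero, Real.zero_rpow hp.ne', Real.zero_rpow hpm.ne', zero_mul]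
  · have hx' : 0 < |x| := abs_pos.mpr hx
    have h1 : |x| ^ (2*m) = x ^ (2*m) := by
      rw [pow_abs, abs_of_nonneg (Even.pow_nonneg (even_two_mul m) x)]
    rw [← h1, ← Real.rpow_natCast |x| (2*m), ← Real.rpow_add hx']
    congr 1
    push_cast
    ring

lemma gauss_moment_series (g p : ℝ) (hp : 0 < p) :
    ∫ x : ℝ, |x| ^ p * Real.exp (-(1/2) * (x - g)^2)
      = Real.exp (-(g^2/2)) * 2 ^ ((p+1)/2) * Real.Gamma ((p+1)/2)
        * ∑' m : ℕ, P ((p+1)/2) m * (g^2/2)^m / (P (1/2) m * (m.factorial : ℝ)) := by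
  have ha : 0 < (p+1)/2 := by linarith
  set F : ℝ → ℝ := fun x => |x| ^ p * Real.exp (-(1/2) * (x - g)^2) with hF
  have hFcont : Continuous F := (continuous_abs.rpow_const (fun x => Or.inr hp.le)).mul
    (Real.continuous_exp.comp (continuous_const.mul ((continuous_id.sub continuous_const).pow 2)))
  have hFnn : ∀ x, 0 ≤ F x := fun x =>
    mul_nonneg (Real.rpow_nonneg (abs_nonneg x) p) (Real.exp_pos _).le
  have hmaj : Integrable (fun x : ℝ =>
      Real.exp (g^2/2) * (|x| ^ p * Real.exp (-(1/4) * x^2))) :=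
    (integrable_abs_rpow_gauss (by norm_num) hp).const_mul _
  have hFint : Integrable F := by
    apply hmaj.mono' hFcont.aestronglyMeasurable
    filter_upwards with x
    rw [Real.norm_eq_abs, abs_of_nonneg (hFnn x)]
    show |x| ^ p * Real.exp (-(1/2) * (x - g)^2) ≤ _
    have hexple : Real.exp (-(1/2) * (x - g)^2) ≤ Real.exp (g^2/2) * Real.exp (-(1/4) * x^2) := by
      rw [← Real.exp_add]
      apply Real.exp_le_exp.mpr
      nlinarith [sq_nonneg (x/2 - g)]
    calc |x| ^ p * Real.exp (-(1/2) * (x - g)^2)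
        ≤ |x| ^ p * (Real.exp (g^2/2) * Real.exp (-(1/4) * x^2)) := by
          apply mul_le_mul_of_nonneg_left hexple (Real.rpow_nonneg (abs_nonneg x) p)
      _ = Real.exp (g^2/2) * (|x| ^ p * Real.exp (-(1/4) * x^2)) := by ring
  have hFneg : Integrable (fun x => F (-x)) :=
    ((Measure.measurePreserving_neg (volume : Measure ℝ)).integrable_comp_emb
      (Homeomorph.neg ℝ).measurableEmbedding).mpr hFint
  have hsymm : ∫ x, F x = ∫ x, (F x + F (-x))/2 := by
    rw [integral_div, integral_add hFint hFneg, integral_neg_eq_self F]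
    ring
  set f : ℕ → ℝ → ℝ := fun m x => Real.exp (-(g^2/2)) * ((g^2)^m / (((2*m).factorial : ℕ) : ℝ))
      * (|x| ^ (p + 2*(m:ℝ)) * Real.exp (-(1/2) * x^2)) with hf
  have hfnn : ∀ m x, 0 ≤ f m x := by
    intro m x
    apply mul_nonneg (mul_nonneg (Real.exp_pos _).le (by positivity))
    exact mul_nonneg (Real.rpow_nonneg (abs_nonneg x) _) (Real.exp_pos _).le
  have hpt : ∀ x, (F x + F (-x))/2 = ∑' m, f m x := by
    intro x
    have e1 : F x + F (-x) = |x|^p * Real.exp (-(1/2)*x^2 - g^2/2)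
        * (Real.exp (g*x) + Real.exp (-(g*x))) := by
      rw [hF]
      simp only [abs_neg]
      have c1 : Real.exp (-(1/2) * (x - g)^2)
          = Real.exp (-(1/2)*x^2 - g^2/2) * Real.exp (g*x) := by
        rw [← Real.exp_add]; congr 1; ring
      have c2 : Real.exp (-(1/2) * (-x - g)^2)
          = Real.exp (-(1/2)*x^2 - g^2/2) * Real.exp (-(g*x)) := by
        rw [← Real.exp_add]; congr 1; ring
      rw [c1, c2]
      ring
    have e2 : (F x + F (-x))/2 = |x|^p * Real.exp (-(1/2)*x^2 - g^2/2)
        * ∑' m : ℕ, (g*x) ^ (2*m) / (((2*m).factorial : ℕ) : ℝ) := by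
      rw [e1, exp_add_exp_neg (g*x)]
      ring
    rw [e2, ← tsum_mul_left]
    apply tsum_congr
    intro m
    rw [hf]
    simp only
    rw [← abs_pow_eq hp m x, mul_pow, pow_mul]
    have eexp : Real.exp (-(1/2)*x^2 - g^2/2)
        = Real.exp (-(g^2/2)) * Real.exp (-(1/2)*x^2) := by
      rw [← Real.exp_add]
      congr 1
      ring
    rw [eexp]
    ring
  have hspos : ∀ m : ℕ, (0:ℝ) < p + 2*(m:ℝ) := by
    intro m
    have : (0:ℝ) ≤ (m:ℝ) := Nat.cast_nonneg m
    linarith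
  have hint : ∀ m : ℕ, Integrable (f m) := by
    intro m
    exact (integrable_abs_rpow_gauss (by norm_num) (hspos m)).const_mul _
  have hval : ∀ m : ℕ, ∫ x, f m x
      = Real.exp (-(g^2/2)) * ((g^2)^m / (((2*m).factorial : ℕ) : ℝ))
        * (2 ^ ((p + 2*(m:ℝ) + 1)/2) * Real.Gamma ((p + 2*(m:ℝ) + 1)/2)) := by
    intro m
    rw [hf]
    simp only
    rw [integral_const_mul, integral_abs_rpow_gauss (hspos m)]
  have hA : ∀ m : ℕ, ∫ x, f m x
      = (Real.exp (-(g^2/2)) * 2 ^ ((p+1)/2) * Real.Gamma ((p+1)/2))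
        * (P ((p+1)/2) m * (g^2/2)^m / (P (1/2) m * (m.factorial : ℝ))) := by
    intro m
    rw [hval m]
    have e1 : (p + 2*(m:ℝ) + 1)/2 = (p+1)/2 + m := by ring
    rw [e1, gamma_poch ha m, Real.rpow_add two_pos ((p+1)/2) m, Real.rpow_natCast 2 m,
      factorial_two_mul m, div_pow (g^2) 2 m]
    have h4 : ((4:ℝ))^m ≠ 0 := by positivity
    have h2 : ((2:ℝ))^m ≠ 0 := by positivity
    have hmf : ((m.factorial : ℕ) : ℝ) ≠ 0 := by positivity
    have hp2 : P (1/2) m ≠ 0 := ne_of_gt (poch_pos (by norm_num) m)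
    have h42 : (4:ℝ)^m = 2^(m*2) := by
      calc (4:ℝ)^m = ((2:ℝ)^2)^m := by norm_num
      _ = 2^(2*m) := by rw [← pow_mul]
      _ = 2^(m*2) := by rw [mul_comm]
    field_simp
    rw [h42]
    ring
  have hAsum : Summable (fun m => ∫ x, f m x) := by
    have h := (summable_M ((p+1)/2) (g^2/2)).mul_left
      (Real.exp (-(g^2/2)) * 2 ^ ((p+1)/2) * Real.Gamma ((p+1)/2))
    exact h.congr (fun m => (hA m).symm)
  have hinterchange : ∫ x, ∑' m, f m x = ∑' m, ∫ x, f m x := by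
    apply integral_tsum (fun m => (hint m).aestronglyMeasurable)
    have h1 : ∀ m : ℕ, ∫⁻ x, ‖f m x‖ₑ = ENNReal.ofReal (∫ x, f m x) := by
      intro m
      rw [ofReal_integral_eq_lintegral_ofReal (hint m) (ae_of_all _ (hfnn m))]
      apply lintegral_congr
      intro x
      rw [Real.enorm_eq_ofReal (hfnn m x)]
    rw [tsum_congr h1,
      ← ENNReal.ofReal_tsum_of_nonneg (fun m => integral_nonneg (hfnn m)) hAsum]
    exact ENNReal.ofReal_ne_top
  have hcongr : ∫ x, (F x + F (-x))/2 = ∫ x, ∑' m, f m x :=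
    integral_congr_ae (ae_of_all _ hpt)
  rw [hsymm, hcongr, hinterchange, tsum_congr hA, tsum_mul_left]

/-- Moments of fractional powers of a noncentral Gaussian: if `Z ~ N(g,1)` and
`q ≥ 1`, then `E[|Z|^{2/q}] = (1/√π)·2^{1/q}·Γ(1/q + 1/2)·M(−1/q, 1/2, −g²/2)`,
where `M(c, d, x) = Σ_{n≥0} (c)_n x^n / ((d)_n n!)` is the confluent
hypergeometric function ((c)_n the rising factorial). -/
theorem gaussian_fractional_moment (g q : ℝ) (hq : 1 ≤ q) :
    ∫ x, |x| ^ (2 / q) ∂(gaussianReal g 1)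
      = (1 / Real.sqrt π) * 2 ^ (1 / q) * Real.Gamma (1 / q + 1 / 2)
        * ∑' n : ℕ, (ascPochhammer ℝ n).eval (-1 / q) * (-(g ^ 2) / 2) ^ n
            / ((ascPochhammer ℝ n).eval (1 / 2) * (n.factorial : ℝ)) := by
  have hq0 : 0 < q := lt_of_lt_of_le one_pos hq
  have hp : 0 < 2/q := by positivity
  have h1 : ∫ x, |x| ^ (2/q) ∂(gaussianReal g 1)
      = ∫ x, gaussianPDFReal g 1 x * |x| ^ (2/q) := by
    rw [gaussianReal_of_var_ne_zero g one_ne_zero]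
    have hm : Measurable (fun x => Real.toNNReal (gaussianPDFReal g 1 x)) :=
      (measurable_gaussianPDFReal g 1).real_toNNReal
    have hgd : gaussianPDF g 1
        = fun x => ((Real.toNNReal (gaussianPDFReal g 1 x) : ℝ≥0) : ℝ≥0∞) := rfl
    rw [hgd, integral_withDensity_eq_integral_smul hm]
    apply integral_congr_ae (ae_of_all _ ?_)
    intro x
    rw [NNReal.smul_def, smul_eq_mul, Real.coe_toNNReal _ (gaussianPDFReal_nonneg g 1 x)]
  have h2 : ∀ x : ℝ, gaussianPDFReal g 1 x * |x| ^ (2/q)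
      = (Real.sqrt (2*π))⁻¹ * (|x| ^ (2/q) * Real.exp (-(1/2) * (x - g)^2)) := by
    intro x
    simp only [gaussianPDFReal, NNReal.coe_one, mul_one]
    rw [show -(x-g)^2/2 = -(1/2)*(x-g)^2 by ring]
    ring
  rw [h1, integral_congr_ae (ae_of_all _ h2), integral_const_mul,
    gauss_moment_series g (2/q) hp]
  have hpa : ((2/q : ℝ)+1)/2 = 1/q + 1/2 := by
    field_simp
  rw [hpa]
  have hneg : (1:ℝ)/2 - (1/q + 1/2) = -1 / q := by ring
  have hts : ∑' n : ℕ, (ascPochhammer ℝ n).eval (-1 / q) * (-(g ^ 2) / 2) ^ n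
        / ((ascPochhammer ℝ n).eval (1 / 2) * (n.factorial : ℝ))
      = ∑' n : ℕ, P (1/2 - (1/q + 1/2)) n * (-(g^2/2))^n / (P (1/2) n * (n.factorial : ℝ)) := by
    apply tsum_congr
    intro n
    simp only [pochEval]
    rw [hneg, show (-(g^2/2) : ℝ) = -(g^2)/2 by ring]
  rw [hts, ← kummer (1/q + 1/2) (g^2/2)]
  have hc : (Real.sqrt (2*π))⁻¹ * 2 ^ ((1:ℝ)/q + 1/2) = (1/Real.sqrt π) * 2 ^ ((1:ℝ)/q) := by
    rw [Real.rpow_add two_pos,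
      show ((2:ℝ) ^ ((1:ℝ)/2)) = Real.sqrt 2 from (Real.sqrt_eq_rpow 2).symm,
      Real.sqrt_mul (by norm_num : (0:ℝ) ≤ 2) π]
    have h2 : (0:ℝ) < Real.sqrt 2 := Real.sqrt_pos.mpr (by norm_num)
    have hπ : (0:ℝ) < Real.sqrt π := Real.sqrt_pos.mpr Real.pi_pos
    field_simp
  linear_combination (Real.exp (-(g^2/2)) * Real.Gamma (1/q + 1/2)
    * ∑' m : ℕ, P (1/q + 1/2) m * (g^2/2)^m / (P (1/2) m * (m.factorial : ℝ))) * hc
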